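/- arXiv:1812.10151 — 2 statements merged into one kernel-verified Lean document; each statement's English description precedes it below -/
import Mathlib

section
/- Let A₁, A₂ ⊆ ℝⁿ be two open, connected, disjoint sets. Suppose there is a nonempty open box B contained in the interior of closure(A₁) ∪ closure(A₂) such that B ∩ A₁ ≠ ∅ and B ∩ A₂ ≠ ∅. Then the interior of closure(A₁) ∪ closure(A₂) is connected. -/
/-- An open box in `ℝⁿ` determined by endpoints `a b : Fin n → ℝ`. -/
def openBox {n : ℕ} (a b : Fin n → ℝ) : Set (Fin n → ℝ) :=
  Set.pi Set.univ (fun i => Set.Ioo (a i) (b i))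

/-- If `A₁, A₂ ⊆ ℝⁿ` are open, connected and disjoint, and some nonempty open box `B`
contained in `interior (closure A₁ ∪ closure A₂)` meets both `A₁` and `A₂`, then
`interior (closure A₁ ∪ closure A₂)` is connected. -/
theorem statement1 {n : ℕ} (A₁ A₂ : Set (Fin n → ℝ))
    (h1o : IsOpen A₁) (h2o : IsOpen A₂)
    (h1c : IsConnected A₁) (h2c : IsConnected A₂)
    (hdisj : Disjoint A₁ A₂)
    (a b : Fin n → ℝ) (hBne : (openBox a b).Nonempty)
    (hBsub : openBox a b ⊆ interior (closure A₁ ∪ closure A₂))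
    (hB1 : (openBox a b ∩ A₁).Nonempty) (hB2 : (openBox a b ∩ A₂).Nonempty) :
    IsConnected (interior (closure A₁ ∪ closure A₂)) := by
  set B := openBox a b
  have hBconv : Convex ℝ B := convex_pi (fun i _ => convex_Ioo _ _)
  have hBconn : IsConnected B := ⟨hBne, hBconv.isPreconnected⟩
  -- A₁ ∪ B connected
  obtain ⟨x, hxB, hxA1⟩ := hB1
  have h1B : IsConnected (A₁ ∪ B) :=
    h1c.union ⟨x, hxA1, hxB⟩ hBconn
  obtain ⟨y, hyB, hyA2⟩ := hB2
  have hY : IsConnected ((A₁ ∪ B) ∪ A₂) :=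
    h1B.union ⟨y, Or.inr hyB, hyA2⟩ h2c
  have hYsub : (A₁ ∪ B) ∪ A₂ ⊆ interior (closure A₁ ∪ closure A₂) := by
    rintro z (⟨hz | hz⟩ | hz)
    · exact interior_maximal (Set.subset_union_left.trans (Set.union_subset_union
        subset_closure subset_closure)) h1o hz
    · exact hBsub hz
    · exact interior_maximal (Set.subset_union_right.trans (Set.union_subset_union
        subset_closure subset_closure)) h2o hz
  have hsubcl : interior (closure A₁ ∪ closure A₂) ⊆ closure ((A₁ ∪ B) ∪ A₂) := by
    refine interior_subset.trans ?_
    apply Set.union_subset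
    · exact closure_mono (fun z hz => Or.inl (Or.inl hz))
    · exact closure_mono (fun z hz => Or.inr hz)
  exact hY.subset_closure hYsub hsubcl
end

section
/- Let A = {2^k : k ∈ ℤ} ⊆ (0,∞), and define f : (0,∞) → ℝ by f(x) = (x − t)(x − 2t) for x ∈ [t, 2t), where t = 2^⌊log₂ x⌋ is the largest element of A not exceeding x. Then f is continuous on (0,∞) but not continuously differentiable at the points of A, and the zero set of f is exactly A; in particular, f is not semialgebraic. -/
/-- Semialgebraic subsets of `ℝⁿ`: the boolean algebra generated by zero sets and
positivity sets of real polynomials in `n` variables. -/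
inductive IsSemialgebraic {n : ℕ} : Set (Fin n → ℝ) → Prop
  | zero_set (p : MvPolynomial (Fin n) ℝ) :
      IsSemialgebraic {x | MvPolynomial.eval x p = 0}
  | pos_set (p : MvPolynomial (Fin n) ℝ) :
      IsSemialgebraic {x | 0 < MvPolynomial.eval x p}
  | union {s t : Set (Fin n → ℝ)} :
      IsSemialgebraic s → IsSemialgebraic t → IsSemialgebraic (s ∪ t)
  | compl {s : Set (Fin n → ℝ)} : IsSemialgebraic s → IsSemialgebraic sᶜ

/-- The largest element `2^⌊log₂ x⌋` of `2^ℤ` not exceeding `x` (for `x > 0`). -/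
noncomputable def pow2floor (x : ℝ) : ℝ := (2 : ℝ) ^ (⌊Real.logb 2 x⌋)

/-- The gluing `f(x) = (x − t)(x − 2t)` with `t = 2^⌊log₂ x⌋`. -/
noncomputable def fglue (x : ℝ) : ℝ := (x - pow2floor x) * (x - 2 * pow2floor x)

open Real Set Filter

lemma two_zpow_pos' (k : ℤ) : (0:ℝ) < 2 ^ k := zpow_pos two_pos k

lemma logb_two_zpow (k : ℤ) : Real.logb 2 ((2:ℝ)^k) = k := by
  rw [← Real.rpow_intCast 2 k, Real.logb_rpow two_pos (by norm_num)]

lemma mem_Ico_pow2 {x : ℝ} (hx : 0 < x) :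
    x ∈ Set.Ico ((2:ℝ) ^ ⌊Real.logb 2 x⌋) ((2:ℝ) ^ (⌊Real.logb 2 x⌋ + 1)) := by
  have hrl : (2:ℝ) ^ Real.logb 2 x = x := Real.rpow_logb two_pos (by norm_num) hx
  constructor
  · calc (2:ℝ) ^ ⌊Real.logb 2 x⌋ = (2:ℝ) ^ ((⌊Real.logb 2 x⌋ : ℝ)) :=
          (Real.rpow_intCast 2 _).symm
      _ ≤ (2:ℝ) ^ (Real.logb 2 x) :=
          (Real.rpow_le_rpow_left_iff (by norm_num : (1:ℝ) < 2)).mpr (Int.floor_le _)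
      _ = x := hrl
  · calc x = (2:ℝ) ^ (Real.logb 2 x) := hrl.symm
      _ < (2:ℝ) ^ ((⌊Real.logb 2 x⌋ + 1 : ℤ) : ℝ) := by
          refine (Real.rpow_lt_rpow_left_iff (by norm_num : (1:ℝ) < 2)).mpr ?_
          push_cast
          exact Int.lt_floor_add_one _
      _ = (2:ℝ) ^ (⌊Real.logb 2 x⌋ + 1) := Real.rpow_intCast 2 _

lemma pow2floor_eq {k : ℤ} {x : ℝ} (hx : x ∈ Set.Ico ((2:ℝ)^k) ((2:ℝ)^(k+1))) :
    pow2floor x = 2 ^ k := by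
  have hx0 : 0 < x := lt_of_lt_of_le (two_zpow_pos' k) hx.1
  have h1 : (k:ℝ) ≤ Real.logb 2 x := by
    rw [← logb_two_zpow k]
    exact (Real.logb_le_logb (by norm_num) (two_zpow_pos' k) hx0).mpr hx.1
  have h2 : Real.logb 2 x < (k:ℝ) + 1 := by
    have := Real.logb_lt_logb (b := 2) (by norm_num) hx0 hx.2
    rwa [logb_two_zpow, Int.cast_add, Int.cast_one] at this
  have : ⌊Real.logb 2 x⌋ = k := by
    rw [Int.floor_eq_iff]
    exact ⟨h1, h2⟩
  rw [pow2floor, this]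

/-- the local polynomial model -/
noncomputable def gq (k : ℤ) (x : ℝ) : ℝ := (x - 2^k) * (x - 2^(k+1))

lemma fglue_eqOn (k : ℤ) : Set.EqOn fglue (gq k) (Set.Ico ((2:ℝ)^k) ((2:ℝ)^(k+1))) := by
  intro x hx
  have h := pow2floor_eq hx
  have h2 : (2:ℝ) ^ (k+1) = 2 * 2 ^ k := by
    rw [zpow_add_one₀ (by norm_num : (2:ℝ) ≠ 0)]; ring
  rw [fglue, gq, h, h2]

lemma gq_cont (k : ℤ) : Continuous (gq k) := by
  unfold gq; fun_prop

lemma zpow_lt_succ (k : ℤ) : (2:ℝ)^k < (2:ℝ)^(k+1) :=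
  zpow_right_strictMono₀ (by norm_num : (1:ℝ) < 2) (by omega)

lemma mem_self_Ico (k : ℤ) : (2:ℝ)^k ∈ Set.Ico ((2:ℝ)^k) ((2:ℝ)^(k+1)) :=
  ⟨le_refl _, zpow_lt_succ k⟩

lemma fglue_zpow (k : ℤ) : fglue ((2:ℝ)^k) = 0 := by
  rw [fglue_eqOn k (mem_self_Ico k), gq]
  simp

/-- eventual equality within `Ici (2^k)` -/
lemma fglue_eventually_right (k : ℤ) :
    fglue =ᶠ[nhdsWithin ((2:ℝ)^k) (Set.Ici ((2:ℝ)^k))] gq k := by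
  have h : Set.Ico ((2:ℝ)^k) ((2:ℝ)^(k+1)) ∈ nhdsWithin ((2:ℝ)^k) (Set.Ici ((2:ℝ)^k)) := by
    rw [← Set.Ici_inter_Iio]
    exact Filter.inter_mem self_mem_nhdsWithin
      (nhdsWithin_le_nhds (Iio_mem_nhds (zpow_lt_succ k)))
  filter_upwards [h] with x hx using fglue_eqOn k hx

lemma fglue_eventually_left (k : ℤ) :
    fglue =ᶠ[nhdsWithin ((2:ℝ)^k) (Set.Iic ((2:ℝ)^k))] gq (k-1) := by
  have h : Set.Ioi ((2:ℝ)^(k-1)) ∈ nhdsWithin ((2:ℝ)^k) (Set.Iic ((2:ℝ)^k)) :=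
    nhdsWithin_le_nhds (Ioi_mem_nhds (by simpa using zpow_lt_succ (k-1)))
  filter_upwards [h, self_mem_nhdsWithin] with x hx1 hx2
  have hx2' : x ≤ (2:ℝ)^k := hx2
  rcases eq_or_lt_of_le hx2' with heq | hlt
  · subst heq
    rw [fglue_zpow, gq]
    simp
  · exact fglue_eqOn (k-1) ⟨le_of_lt hx1, by simpa using hlt⟩

lemma fglue_continuousOn : ContinuousOn fglue (Set.Ioi 0) := by
  intro a ha
  apply ContinuousAt.continuousWithinAt
  have ha0 : (0:ℝ) < a := ha
  set k := ⌊Real.logb 2 a⌋ with hk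
  have hmem := mem_Ico_pow2 ha0
  rcases eq_or_lt_of_le hmem.1 with heq | hlt
  · -- a = 2^k, boundary point
    rw [ContinuousAt, ← heq]
    rw [← nhdsLT_sup_nhdsGE ((2:ℝ)^k)]
    rw [Filter.tendsto_sup]
    have hval : fglue ((2:ℝ)^k) = 0 := fglue_zpow k
    constructor
    · -- left
      have hev := fglue_eventually_left k
      have hev' : fglue =ᶠ[nhdsWithin ((2:ℝ)^k) (Set.Iio ((2:ℝ)^k))] gq (k-1) :=
        hev.filter_mono (nhdsWithin_mono _ Set.Iio_subset_Iic_self)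
      have hg : Filter.Tendsto (gq (k-1)) (nhdsWithin ((2:ℝ)^k) (Set.Iio ((2:ℝ)^k)))
          (nhds (gq (k-1) ((2:ℝ)^k))) :=
        ((gq_cont (k-1)).continuousAt).continuousWithinAt.tendsto
      have hzz : gq (k-1) ((2:ℝ)^k) = 0 := by rw [gq]; simp
      rw [hval]
      rw [hzz] at hg
      exact hg.congr' hev'.symm
    · have hg : Filter.Tendsto (gq k) (nhdsWithin ((2:ℝ)^k) (Set.Ici ((2:ℝ)^k)))
          (nhds (gq k ((2:ℝ)^k))) :=
        ((gq_cont k).continuousAt).continuousWithinAt.tendsto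
      have hzz : gq k ((2:ℝ)^k) = 0 := by rw [gq]; simp
      rw [hzz] at hg
      rw [hval]
      exact hg.congr' (fglue_eventually_right k).symm
  · -- interior point
    have hoo : Set.Ioo ((2:ℝ)^k) ((2:ℝ)^(k+1)) ∈ nhds a := Ioo_mem_nhds hlt hmem.2
    have hev : fglue =ᶠ[nhds a] gq k := by
      filter_upwards [hoo] with x hx using fglue_eqOn k ⟨le_of_lt hx.1, hx.2⟩
    exact ((gq_cont k).continuousAt).congr hev.symm

lemma fglue_not_diff (k : ℤ) : ¬ DifferentiableAt ℝ fglue ((2:ℝ)^k) := by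
  intro hd
  set a := (2:ℝ)^k with hadef
  have hda := hd.hasDerivAt
  -- right derivative
  have hgr : HasDerivAt (gq k) (-(2:ℝ)^k) a := by
    have h1 := ((hasDerivAt_id a).sub_const ((2:ℝ)^k)).mul
      ((hasDerivAt_id a).sub_const ((2:ℝ)^(k+1)))
    simp only [id_eq] at h1
    unfold gq
    refine h1.congr_deriv ?_
    have h2 : (2:ℝ) ^ (k+1) = 2 * 2 ^ k := by
      rw [zpow_add_one₀ (by norm_num : (2:ℝ) ≠ 0)]; ring
    rw [hadef, h2]; ring
  have hgl : HasDerivAt (gq (k-1)) ((2:ℝ)^(k-1)) a := by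
    have h1 := ((hasDerivAt_id a).sub_const ((2:ℝ)^(k-1))).mul
      ((hasDerivAt_id a).sub_const ((2:ℝ)^(k-1+1)))
    simp only [id_eq] at h1
    unfold gq
    refine h1.congr_deriv ?_
    have h2 : (k - 1 + 1 : ℤ) = k := by omega
    have h3 : (2:ℝ)^k = 2 * 2^(k-1) := by
      rw [show k = (k-1)+1 by omega, zpow_add_one₀ (by norm_num : (2:ℝ) ≠ 0)]; ring
    rw [h2, hadef, h3]; ring
  have hvr : fglue a = gq k a := fglue_eqOn k (mem_self_Ico k)
  have hvl : fglue a = gq (k-1) a := by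
    rw [fglue_zpow, gq]
    have h2 : (k - 1 + 1 : ℤ) = k := by omega
    rw [h2]; simp [hadef]
  have hr : HasDerivWithinAt fglue (-(2:ℝ)^k) (Set.Ici a) a :=
    (hgr.hasDerivWithinAt).congr_of_eventuallyEq (fglue_eventually_right k) hvr
  have hl : HasDerivWithinAt fglue ((2:ℝ)^(k-1)) (Set.Iic a) a :=
    (hgl.hasDerivWithinAt).congr_of_eventuallyEq (fglue_eventually_left k) hvl
  have h1 : derivWithin fglue (Set.Ici a) a = -(2:ℝ)^k :=
    hr.derivWithin (uniqueDiffOn_Ici a a Set.self_mem_Ici)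
  have h2 : derivWithin fglue (Set.Ici a) a = deriv fglue a :=
    (hda.hasDerivWithinAt.derivWithin (uniqueDiffOn_Ici a a Set.self_mem_Ici))
  have h3 : derivWithin fglue (Set.Iic a) a = (2:ℝ)^(k-1) :=
    hl.derivWithin (uniqueDiffOn_Iic a a Set.self_mem_Iic)
  have h4 : derivWithin fglue (Set.Iic a) a = deriv fglue a :=
    (hda.hasDerivWithinAt.derivWithin (uniqueDiffOn_Iic a a Set.self_mem_Iic))
  have : -(2:ℝ)^k = (2:ℝ)^(k-1) := by rw [← h1, h2, ← h4, h3]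
  have p1 := two_zpow_pos' k
  have p2 := two_zpow_pos' (k-1)
  linarith

lemma fglue_zero_set :
    {x ∈ Set.Ioi (0 : ℝ) | fglue x = 0} = {x : ℝ | ∃ k : ℤ, x = (2 : ℝ) ^ k} := by
  ext x
  simp only [Set.mem_setOf_eq, Set.mem_Ioi]
  constructor
  · rintro ⟨hx, hz⟩
    set k := ⌊Real.logb 2 x⌋ with hk
    have hmem := mem_Ico_pow2 hx
    have hpf : pow2floor x = 2 ^ k := pow2floor_eq hmem
    rw [fglue, hpf] at hz
    rcases mul_eq_zero.mp hz with h | h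
    · exact ⟨k, by linarith⟩
    · exfalso
      have : (2:ℝ)^(k+1) = 2 * 2^k := by
        rw [zpow_add_one₀ (by norm_num : (2:ℝ) ≠ 0)]; ring
      have := hmem.2
      rw [‹(2:ℝ)^(k+1) = 2 * 2^k›] at this
      linarith
  · rintro ⟨k, rfl⟩
    exact ⟨two_zpow_pos' k, fglue_zpow k⟩

-- Semialgebraic part

noncomputable def lineEmb (x : ℝ) : Fin 2 → ℝ := ![x, 0]

lemma frontier_finite_of_semialg {s : Set (Fin 2 → ℝ)} (hs : IsSemialgebraic s) :
    (frontier (lineEmb ⁻¹' s)).Finite := by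
  induction hs with
  | zero_set p =>
      set q : Polynomial ℝ := MvPolynomial.eval₂ Polynomial.C ![Polynomial.X, 0] p with hq
      have hkey : ∀ t : ℝ, MvPolynomial.eval (lineEmb t) p = Polynomial.eval t q := by
        intro t
        have hc := MvPolynomial.eval₂_comp_left (Polynomial.evalRingHom t) Polynomial.C
          ![Polynomial.X, 0] p
        have h1 : (Polynomial.evalRingHom t).comp Polynomial.C = RingHom.id ℝ := by
          ext r; simp
        have h2 : (⇑(Polynomial.evalRingHom t) ∘ ![Polynomial.X, 0]) = lineEmb t := by
          funext i; fin_cases i <;> simp [lineEmb]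
        rw [h1, h2, MvPolynomial.eval₂_id] at hc
        rw [hq, ← hc]
        rfl
      have hset : lineEmb ⁻¹' {x | MvPolynomial.eval x p = 0} = {t | Polynomial.eval t q = 0} := by
        ext t; simp [hkey t]
      rw [hset]
      by_cases hq0 : q = 0
      · simp [hq0]
      · have hfin : ({t | Polynomial.eval t q = 0}).Finite := q.finite_setOf_isRoot hq0
        exact hfin.subset ((frontier_subset_closure).trans (by
          rw [hfin.isClosed.closure_eq]))
  | pos_set p =>
      set q : Polynomial ℝ := MvPolynomial.eval₂ Polynomial.C ![Polynomial.X, 0] p with hq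
      have hkey : ∀ t : ℝ, MvPolynomial.eval (lineEmb t) p = Polynomial.eval t q := by
        intro t
        have hc := MvPolynomial.eval₂_comp_left (Polynomial.evalRingHom t) Polynomial.C
          ![Polynomial.X, 0] p
        have h1 : (Polynomial.evalRingHom t).comp Polynomial.C = RingHom.id ℝ := by
          ext r; simp
        have h2 : (⇑(Polynomial.evalRingHom t) ∘ ![Polynomial.X, 0]) = lineEmb t := by
          funext i; fin_cases i <;> simp [lineEmb]
        rw [h1, h2, MvPolynomial.eval₂_id] at hc
        rw [hq, ← hc]
        rfl
      have hset : lineEmb ⁻¹' {x | 0 < MvPolynomial.eval x p} = {t | 0 < Polynomial.eval t q} := by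
        ext t; simp [hkey t]
      rw [hset]
      by_cases hq0 : q = 0
      · simp [hq0]
      · have hfin : ({t | Polynomial.eval t q = 0}).Finite := q.finite_setOf_isRoot hq0
        refine hfin.subset ?_
        intro x hx
        have hopen : IsOpen {t : ℝ | 0 < Polynomial.eval t q} :=
          isOpen_lt continuous_const q.continuous
        have hcl : x ∈ closure {t : ℝ | 0 < Polynomial.eval t q} := hx.1
        have hge : 0 ≤ Polynomial.eval x q := by
          have hsub : closure {t : ℝ | 0 < Polynomial.eval t q} ⊆ {t | 0 ≤ Polynomial.eval t q} := by
            refine closure_minimal ?_ (isClosed_le continuous_const q.continuous)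
            intro t ht
            simp only [Set.mem_setOf_eq] at ht ⊢
            exact ht.le
          exact hsub hcl
        have hni : Polynomial.eval x q ≤ 0 := by
          by_contra hpos
          push_neg at hpos
          exact hx.2 (by rw [hopen.interior_eq]; exact hpos)
        exact le_antisymm hni hge
  | union hs ht ihs iht =>
      rw [Set.preimage_union]
      exact (ihs.union iht).subset
        ((frontier_union_subset _ _).trans
          (Set.union_subset_union (Set.inter_subset_left) (Set.inter_subset_right)))
  | compl hs ihs =>
      rw [Set.preimage_compl, frontier_compl]
      exact ihs

lemma fglue_not_semialg :
    ¬ IsSemialgebraic {z : Fin 2 → ℝ | 0 < z 0 ∧ z 1 = fglue (z 0)} := by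
  intro h
  have hfin := frontier_finite_of_semialg h
  have hpre : lineEmb ⁻¹' {z : Fin 2 → ℝ | 0 < z 0 ∧ z 1 = fglue (z 0)}
      = {x : ℝ | ∃ k : ℤ, x = (2:ℝ)^k} := by
    rw [← fglue_zero_set]
    ext x
    simp [lineEmb, Set.mem_Ioi, eq_comm, and_comm]
  rw [hpre] at hfin
  -- every 2^k lies in the frontier
  have hmem : ∀ k : ℤ, (2:ℝ)^k ∈ frontier {x : ℝ | ∃ k : ℤ, x = (2:ℝ)^k} := by
    intro k
    constructor
    · exact subset_closure ⟨k, rfl⟩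
    · intro hint
      rw [mem_interior_iff_mem_nhds] at hint
      have hIoo : Set.Ioo ((2:ℝ)^k) ((2:ℝ)^(k+1)) ∩ {x : ℝ | ∃ k : ℤ, x = (2:ℝ)^k} = ∅ := by
        ext x
        simp only [Set.mem_inter_iff, Set.mem_Ioo, Set.mem_setOf_eq, Set.mem_empty_iff_false,
          iff_false, not_and]
        rintro ⟨h1, h2⟩ ⟨m, rfl⟩
        have hm1 : k < m := (zpow_lt_zpow_iff_right₀ (by norm_num : (1:ℝ) < 2)).mp h1
        have hm2 : m < k + 1 := (zpow_lt_zpow_iff_right₀ (by norm_num : (1:ℝ) < 2)).mp h2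
        omega
      -- but a right-neighborhood of 2^k meets Ioo
      have h2 : {x : ℝ | ∃ k : ℤ, x = (2:ℝ)^k} ∈ nhdsWithin ((2:ℝ)^k) (Set.Ioi ((2:ℝ)^k)) :=
        nhdsWithin_le_nhds hint
      have hne : (nhdsWithin ((2:ℝ)^k) (Set.Ioi ((2:ℝ)^k))).NeBot :=
        nhdsGT_neBot _
      have h3 : Set.Iio ((2:ℝ)^(k+1)) ∈ nhdsWithin ((2:ℝ)^k) (Set.Ioi ((2:ℝ)^k)) :=
        nhdsWithin_le_nhds (Iio_mem_nhds (zpow_lt_succ k))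
      have h4 := Filter.inter_mem (Filter.inter_mem h2 h3) self_mem_nhdsWithin
      rcases hne.nonempty_of_mem h4 with ⟨x, ⟨hx1, hx2⟩, hx3⟩
      have : x ∈ Set.Ioo ((2:ℝ)^k) ((2:ℝ)^(k+1)) ∩ {x : ℝ | ∃ k : ℤ, x = (2:ℝ)^k} :=
        ⟨⟨hx3, hx2⟩, hx1⟩
      rw [hIoo] at this
      exact this
  have hinj : Function.Injective (fun k : ℤ => (2:ℝ)^k) :=
    (zpow_right_strictMono₀ (by norm_num : (1:ℝ) < 2)).injective
  have hinfinite : (frontier {x : ℝ | ∃ k : ℤ, x = (2:ℝ)^k}).Infinite := by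
    apply Set.infinite_of_injective_forall_mem hinj
    intro k
    exact hmem k
  exact hinfinite hfin

/-- `fglue` is continuous on `(0,∞)`, not differentiable at the points of `2^ℤ`, its zero
set in `(0,∞)` is exactly `2^ℤ`, and it is not semialgebraic. -/
theorem statement11 :
    ContinuousOn fglue (Set.Ioi 0) ∧
    (∀ k : ℤ, ¬ DifferentiableAt ℝ fglue ((2 : ℝ) ^ k)) ∧
    {x ∈ Set.Ioi (0 : ℝ) | fglue x = 0} = {x : ℝ | ∃ k : ℤ, x = (2 : ℝ) ^ k} ∧
    ¬ IsSemialgebraic {z : Fin 2 → ℝ | 0 < z 0 ∧ z 1 = fglue (z 0)} :=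
  ⟨fglue_continuousOn, fglue_not_diff, fglue_zero_set, fglue_not_semialg⟩
end
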